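/- For every real d > 0 and every real ρ ≥ arsinh(d + 1), one has the strict inequality ∫_{arsinh(d+1)}^{ρ} (sinh x)² / √((sinh x)² − d²) dx < (√(e^{2ρ} − (2 + 4d²)) − √(8d + 2)) / 2. -/

import Mathlib

open Real MeasureTheory

theorem catenoid_I2_bound :
    ∀ d : ℝ, 0 < d → ∀ ρ : ℝ, Real.arsinh (d + 1) ≤ ρ →
      (∫ x in Set.Ioc (Real.arsinh (d + 1)) ρ,
          (Real.sinh x) ^ 2 / Real.sqrt ((Real.sinh x) ^ 2 - d ^ 2))
        < (Real.sqrt (Real.exp (2 * ρ) - (2 + 4 * d ^ 2)) - Real.sqrt (8 * d + 2)) / 2 := by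
  intro d hd ρ hρ
  set a := Real.arsinh (d + 1) with ha
  set c : ℝ := 2 + 4 * d ^ 2 with hc
  have hsa : Real.sinh a = d + 1 := Real.sinh_arsinh _
  -- exp a > 2(d+1)
  have hea : 2 * (d + 1) < Real.exp a := by
    rw [ha, Real.exp_arsinh]
    have h1 : (d + 1) < Real.sqrt (1 + (d + 1) ^ 2) := by
      rw [Real.lt_sqrt (by linarith)]
      linarith
    linarith
  -- pointwise positivity facts on Icc a ρ
  have hsinh_ge : ∀ x ∈ Set.Icc a ρ, d + 1 ≤ Real.sinh x := by
    intro x hx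
    rw [← hsa]; exact Real.sinh_le_sinh.mpr hx.1
  have hden_pos : ∀ x ∈ Set.Icc a ρ, 0 < Real.sinh x ^ 2 - d ^ 2 := by
    intro x hx
    have := hsinh_ge x hx
    nlinarith [hd]
  have hexp_gt : ∀ x ∈ Set.Icc a ρ, c + (8 * d + 2) < Real.exp (2 * x) := by
    intro x hx
    have h1 : Real.exp a ≤ Real.exp x := Real.exp_le_exp.mpr hx.1
    have h2 : Real.exp (2 * x) = Real.exp x ^ 2 := by
      rw [two_mul, Real.exp_add, sq]
    rw [h2, hc]
    nlinarith [hea, h1, hd]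
  have hexp_pos : ∀ x ∈ Set.Icc a ρ, 0 < Real.exp (2 * x) - c := by
    intro x hx; have := hexp_gt x hx; linarith [hd.le]
  set f : ℝ → ℝ := fun x => Real.sinh x ^ 2 / Real.sqrt (Real.sinh x ^ 2 - d ^ 2) with hf
  set g : ℝ → ℝ := fun x => Real.exp (2 * x) / (2 * Real.sqrt (Real.exp (2 * x) - c)) with hg
  -- continuity / integrability
  have hfc : ContinuousOn f (Set.Icc a ρ) := by
    apply ContinuousOn.div
    · exact (Real.continuous_sinh.pow 2).continuousOn
    · exact (Real.continuous_sqrt.comp ((Real.continuous_sinh.pow 2).sub continuous_const)).continuousOn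
    · intro x hx
      exact (Real.sqrt_pos.mpr (hden_pos x hx)).ne'
  have hgc : ContinuousOn g (Set.Icc a ρ) := by
    apply ContinuousOn.div
    · exact (Real.continuous_exp.comp (continuous_const.mul continuous_id)).continuousOn
    · exact (continuous_const.mul (Real.continuous_sqrt.comp
        ((Real.continuous_exp.comp (continuous_const.mul continuous_id)).sub
          continuous_const))).continuousOn
    · intro x hx
      have := Real.sqrt_pos.mpr (hexp_pos x hx)
      positivity
  have hfi : IntervalIntegrable f volume a ρ := hfc.intervalIntegrable_of_Icc hρ
  have hgi : IntervalIntegrable g volume a ρ := hgc.intervalIntegrable_of_Icc hρ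
  -- pointwise bound f ≤ g on Icc
  have hfg : ∀ x ∈ Set.Icc a ρ, f x ≤ g x := by
    intro x hx
    have hE : 0 < Real.exp x := Real.exp_pos x
    have h2 : Real.exp (2 * x) = Real.exp x ^ 2 := by rw [two_mul, Real.exp_add, sq]
    have hsinh : Real.sinh x = (Real.exp x - Real.exp (-x)) / 2 := Real.sinh_eq x
    have hEinv : Real.exp (-x) = (Real.exp x)⁻¹ := Real.exp_neg x
    have hs_pos : 0 < Real.sinh x := lt_of_lt_of_le (by linarith) (hsinh_ge x hx)
    have hnum : Real.sinh x ^ 2 ≤ Real.exp (2 * x) / 4 := by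
      rw [h2, hsinh, hEinv]
      have hi : (0:ℝ) < (Real.exp x)⁻¹ := by positivity
      have hle : (Real.exp x)⁻¹ ≤ Real.exp x := by
        rw [hEinv] at hsinh
        nlinarith [hs_pos]
      nlinarith [sq_nonneg ((Real.exp x)⁻¹)]
    have hdenom : (Real.exp (2 * x) - c) / 4 ≤ Real.sinh x ^ 2 - d ^ 2 := by
      rw [h2, hsinh, hEinv, hc]
      have hEne : Real.exp x ≠ 0 := hE.ne'
      have key : ((Real.exp x - (Real.exp x)⁻¹) / 2) ^ 2
          = (Real.exp x ^ 2 - 2 + ((Real.exp x)⁻¹) ^ 2) / 4 := by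
        field_simp; ring
      rw [key]
      nlinarith [sq_nonneg ((Real.exp x)⁻¹)]
    have hsq4 : Real.sqrt ((Real.exp (2 * x) - c) / 4) = Real.sqrt (Real.exp (2 * x) - c) / 2 := by
      rw [show ((Real.exp (2 * x) - c) / 4) = (Real.exp (2 * x) - c) / 2 ^ 2 by norm_num,
        Real.sqrt_div' _ (by positivity : (0:ℝ) ≤ 2 ^ 2), Real.sqrt_sq (by norm_num : (0:ℝ) ≤ 2)]
    have hsq : Real.sqrt (Real.exp (2 * x) - c) / 2 ≤ Real.sqrt (Real.sinh x ^ 2 - d ^ 2) := by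
      rw [← hsq4]
      exact Real.sqrt_le_sqrt hdenom
    have hsqpos : 0 < Real.sqrt (Real.exp (2 * x) - c) := Real.sqrt_pos.mpr (hexp_pos x hx)
    have step : f x ≤ (Real.exp (2 * x) / 4) / (Real.sqrt (Real.exp (2 * x) - c) / 2) := by
      apply div_le_div₀ (by positivity) hnum (by positivity) hsq
    calc f x ≤ (Real.exp (2 * x) / 4) / (Real.sqrt (Real.exp (2 * x) - c) / 2) := step
      _ = g x := by
          rw [hg]
          field_simp
          ring
  -- FTC for g
  set F : ℝ → ℝ := fun x => Real.sqrt (Real.exp (2 * x) - c) / 2 with hF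
  have hderiv : ∀ x ∈ Set.uIcc a ρ, HasDerivAt F (g x) x := by
    intro x hx
    rw [Set.uIcc_of_le hρ] at hx
    have h1 : HasDerivAt (fun x => Real.exp (2 * x) - c) (2 * Real.exp (2 * x)) x := by
      have h0 : HasDerivAt (fun x : ℝ => 2 * x) 2 x := by
        simpa using (hasDerivAt_id x).const_mul 2
      simpa [mul_comm] using (h0.exp.sub_const c)
    have h2 := (h1.sqrt (hexp_pos x hx).ne').div_const 2
    convert h2 using 1
    case e'_4 => rfl
    case e'_5 => rfl
    have hsqpos : 0 < Real.sqrt (Real.exp (2 * x) - c) := Real.sqrt_pos.mpr (hexp_pos x hx)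
    rw [hg]
    field_simp
  have hgint : ∫ x in a..ρ, g x = F ρ - F a :=
    intervalIntegral.integral_eq_sub_of_hasDerivAt hderiv hgi
  -- endpoint bound : sqrt(8d+2) < sqrt(exp(2a) - c)
  have hend : Real.sqrt (8 * d + 2) < Real.sqrt (Real.exp (2 * a) - c) := by
    apply Real.sqrt_lt_sqrt (by linarith)
    have := hexp_gt a ⟨le_refl a, hρ⟩
    linarith
  -- assemble
  have hIoc : (∫ x in Set.Ioc a ρ, f x) = ∫ x in a..ρ, f x :=
    (intervalIntegral.integral_of_le hρ).symm
  have hmono : (∫ x in a..ρ, f x) ≤ ∫ x in a..ρ, g x :=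
    intervalIntegral.integral_mono_on hρ hfi hgi hfg
  rw [hIoc]
  calc (∫ x in a..ρ, f x) ≤ ∫ x in a..ρ, g x := hmono
    _ = F ρ - F a := hgint
    _ < (Real.sqrt (Real.exp (2 * ρ) - c) - Real.sqrt (8 * d + 2)) / 2 := by
        rw [hF]
        dsimp only
        linarith [hend]
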